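/- Let ħ > 0, let X and Y be real symmetric n×n matrices with X positive definite, set M = X + iY, and let z₀ = (x₀,p₀) ∈ ℝ²ⁿ. Define the shifted squeezed coherent state Φ_{M,z₀} = T̂(z₀)Φ_M, where Φ_M(x) = (πħ)^{−n/4}(det X)^{1/4} e^{−⟨(X+iY)x,x⟩/(2ħ)} and (T̂(z₀)ψ)(x) = e^{(i/ħ)(p₀·x − p₀·x₀/2)} ψ(x − x₀). Then for every z ∈ ℝ²ⁿ, WΦ_{M,z₀}(z) = (πħ)^{−n} e^{−⟨G(z−z₀), z−z₀⟩/ħ}, where G = ((X + Y X⁻¹ Y, Y X⁻¹),(X⁻¹ Y, X⁻¹)). -/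

import Mathlib

open Matrix MeasureTheory

noncomputable section

open Complex Real

noncomputable section
variable {n : ℕ}

lemma posdef_smul {A : Matrix (Fin n) (Fin n) ℝ} (hA : A.PosDef) {r : ℝ} (hr : 0 < r) :
    (r • A).PosDef := by
  rw [posDef_iff_dotProduct_mulVec] at hA ⊢
  constructor
  · unfold Matrix.IsHermitian
    rw [conjTranspose_smul]
    rw [hA.1.eq]; simp
  · intro x hx
    have := hA.2 hx
    simp only [smul_mulVec, dotProduct_smul] at *
    simpa using mul_pos hr this

lemma integral_comp_mulVec (f : (Fin n → ℝ) → ℂ) (hf : Continuous f)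
    (S : Matrix (Fin n) (Fin n) ℝ) (hS : S.det ≠ 0) :
    ∫ y : Fin n → ℝ, f y = |S.det| * ∫ w : Fin n → ℝ, f (S.mulVec w) := by
  have hmap := Real.map_matrix_volume_pi_eq_smul_volume_pi hS
  have hmeas : AEMeasurable (Matrix.toLin' S) (volume : Measure (Fin n → ℝ)) :=
    (LinearMap.continuous_of_finiteDimensional _).measurable.aemeasurable
  have h1 : ∫ y, f y ∂(Measure.map (Matrix.toLin' S) volume)
      = ∫ w, f (S.mulVec w) := by
    rw [integral_map hmeas (hf.aestronglyMeasurable)]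
    simp [Matrix.toLin'_apply]
  rw [hmap, integral_smul_measure, ENNReal.toReal_ofReal (by positivity)] at h1
  rw [← h1, Complex.real_smul, ← mul_assoc, ← Complex.ofReal_mul, abs_inv,
    mul_inv_cancel₀ (by simpa using hS), Complex.ofReal_one, one_mul]

lemma dot_aux (M : Matrix (Fin n) (Fin n) ℝ) (a b : Fin n → ℝ) :
    M.mulVec a ⬝ᵥ b = a ⬝ᵥ Mᵀ.mulVec b := by
  rw [dotProduct_comm, dotProduct_mulVec, ← mulVec_transpose, dotProduct_comm]

open scoped MatrixOrder in
lemma gaussA (A : Matrix (Fin n) (Fin n) ℝ) (hApos : A.PosDef) (c : ℂ) (q : Fin n → ℝ) :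
    ∫ y : Fin n → ℝ, Complex.exp (-((A.mulVec y ⬝ᵥ y : ℝ) : ℂ) + c * ((q ⬝ᵥ y : ℝ) : ℂ))
      = ((Real.sqrt (Real.pi ^ n / A.det) : ℝ) : ℂ) *
        Complex.exp (c ^ 2 * ((A⁻¹.mulVec q ⬝ᵥ q : ℝ) : ℂ) / 4) := by
  have hdetA : 0 < A.det := hApos.det_pos
  have hB : (A⁻¹).PosDef := hApos.inv
  set S := CFC.sqrt (A⁻¹) with hSdef
  have hSS : S * S = A⁻¹ := CFC.sqrt_mul_sqrt_self _ hB.posSemidef.nonneg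
  have hSt : Sᵀ = S := by
    have := (CFC.sqrt_nonneg (A⁻¹)).posSemidef.isHermitian
    simpa [Matrix.IsHermitian, Matrix.conjTranspose_eq_transpose_of_trivial] using this
  have hdetS2 : S.det * S.det = A⁻¹.det := by rw [← Matrix.det_mul, hSS]
  have hdetAinv : A⁻¹.det = A.det⁻¹ := by rw [Matrix.det_nonsing_inv, Ring.inverse_eq_inv']
  have hdetS : S.det ≠ 0 := by
    intro h; rw [h, mul_zero, hdetAinv] at hdetS2
    exact (inv_ne_zero hdetA.ne') hdetS2.symm
  have hSunit : IsUnit S.det := hdetS.isUnit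
  have hAunit : IsUnit A.det := hdetA.ne'.isUnit
  -- S * A * S = 1
  have hAt : Aᵀ = A := by
    have := hApos.1
    simpa [Matrix.IsHermitian, Matrix.conjTranspose_eq_transpose_of_trivial] using this
  have hSAS : Sᵀ * A * S = 1 := by
    rw [hSt]
    have : A = (S * S)⁻¹ := by rw [hSS, Matrix.nonsing_inv_nonsing_inv _ hAunit]
    rw [this, Matrix.mul_inv_rev, ← Matrix.mul_assoc S S⁻¹ S⁻¹,
      Matrix.mul_nonsing_inv _ hSunit, Matrix.one_mul, Matrix.nonsing_inv_mul _ hSunit]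
  have hcont : Continuous fun y : Fin n → ℝ =>
      Complex.exp (-((A.mulVec y ⬝ᵥ y : ℝ) : ℂ) + c * ((q ⬝ᵥ y : ℝ) : ℂ)) := by
    simp only [dotProduct, mulVec]
    fun_prop
  rw [integral_comp_mulVec _ hcont S hdetS]
  have hquad : ∀ w : Fin n → ℝ, A.mulVec (S.mulVec w) ⬝ᵥ S.mulVec w = w ⬝ᵥ w := by
    intro w
    rw [mulVec_mulVec, dot_aux, mulVec_mulVec, Matrix.transpose_mul, hAt, hSAS,
      Matrix.one_mulVec]
  have hlin : ∀ w : Fin n → ℝ, q ⬝ᵥ S.mulVec w = S.mulVec q ⬝ᵥ w := by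
    intro w
    rw [dot_aux, hSt, dotProduct_comm, dot_aux, hSt, dotProduct_comm]
  have key : ∫ w : Fin n → ℝ,
      Complex.exp (-((A.mulVec (S.mulVec w) ⬝ᵥ S.mulVec w : ℝ) : ℂ) +
        c * ((q ⬝ᵥ S.mulVec w : ℝ) : ℂ))
      = (Real.pi : ℂ) ^ ((n : ℂ) / 2) *
        Complex.exp (c ^ 2 * ((A⁻¹.mulVec q ⬝ᵥ q : ℝ) : ℂ) / 4) := by
    have h1 : ∀ w : Fin n → ℝ,
        (-((A.mulVec (S.mulVec w) ⬝ᵥ S.mulVec w : ℝ) : ℂ) +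
          c * ((q ⬝ᵥ S.mulVec w : ℝ) : ℂ))
        = (-(1:ℂ) * ∑ i, ((w i : ℂ)) ^ 2 + ∑ i, (c * ((S.mulVec q) i : ℂ)) * (w i : ℂ)) := by
      intro w
      rw [hquad, hlin]
      simp only [dotProduct]
      push_cast
      rw [Finset.mul_sum]
      congr 1
      · rw [neg_one_mul]
        congr 1
        exact Finset.sum_congr rfl fun i _ => (sq (w i : ℂ)).symm ▸ rfl
      · exact Finset.sum_congr rfl fun i _ => by ring
    simp_rw [h1]
    rw [GaussianFourier.integral_cexp_neg_mul_sum_add (by norm_num) (fun i => c * ((S.mulVec q) i : ℂ))]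
    congr 1
    · norm_num
    · congr 1
      have : ∑ i, (c * ((S.mulVec q) i : ℂ)) ^ 2
          = c ^ 2 * ((S.mulVec q ⬝ᵥ S.mulVec q : ℝ) : ℂ) := by
        simp only [dotProduct]
        push_cast
        rw [Finset.mul_sum]
        exact Finset.sum_congr rfl fun i _ => by ring
      rw [this]
      have : S.mulVec q ⬝ᵥ S.mulVec q = A⁻¹.mulVec q ⬝ᵥ q := by
        rw [dot_aux, hSt, mulVec_mulVec, hSS, dotProduct_comm]
      rw [this]
      ring
  rw [key]
  rw [← mul_assoc]
  congr 1
  -- prefactor: |det S| * pi^(n/2) = sqrt(pi^n / det A)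
  have habs : |S.det| = Real.sqrt A.det⁻¹ := by
    rw [← hdetAinv, ← hdetS2, ← Real.sqrt_mul_self_eq_abs]
  have hpow : (Real.pi : ℂ) ^ ((n : ℂ) / 2) = ((Real.sqrt (Real.pi ^ n) : ℝ) : ℂ) := by
    rw [show ((n : ℂ) / 2) = (((n : ℝ) / 2 : ℝ) : ℂ) by push_cast; ring,
      ← Complex.ofReal_cpow Real.pi_pos.le]
    congr 1
    rw [Real.sqrt_eq_rpow, ← Real.rpow_natCast Real.pi n, ← Real.rpow_mul Real.pi_pos.le]
    congr 1
    ring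
  rw [habs, hpow, ← Complex.ofReal_mul]
  congr 1
  rw [← Real.sqrt_mul (by positivity), div_eq_mul_inv, mul_comm]

lemma sym_dot {M : Matrix (Fin n) (Fin n) ℝ} (hM : Mᵀ = M) (a b : Fin n → ℝ) :
    M.mulVec a ⬝ᵥ b = M.mulVec b ⬝ᵥ a := by
  rw [dot_aux, hM, dotProduct_comm]

lemma quad_decomp {M : Matrix (Fin n) (Fin n) ℝ} (hM : Mᵀ = M) (u y : Fin n → ℝ) (s : ℝ) :
    M.mulVec (u + s • y) ⬝ᵥ (u + s • y)
      = M.mulVec u ⬝ᵥ u + 2 * s * (M.mulVec u ⬝ᵥ y) + s^2 * (M.mulVec y ⬝ᵥ y) := by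
  simp only [mulVec_add, mulVec_smul, add_dotProduct, smul_dotProduct, dotProduct_add,
    dotProduct_smul, smul_eq_mul]
  rw [sym_dot hM y u]
  ring

lemma half_split (u y : Fin n → ℝ) : u + y / 2 = u + (2⁻¹ : ℝ) • y := by
  funext i; simp [div_eq_inv_mul]

lemma half_split' (u y : Fin n → ℝ) : u - y / 2 = u + (-2⁻¹ : ℝ) • y := by
  funext i; simp [div_eq_inv_mul]; ring

lemma block_id {X Y : Matrix (Fin n) (Fin n) ℝ} (hX : Xᵀ = X) (hY : Yᵀ = Y)
    (u q' : Fin n → ℝ) :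
    (Matrix.fromBlocks (X + Y * X⁻¹ * Y) (Y * X⁻¹) (X⁻¹ * Y) X⁻¹).mulVec
        (Sum.elim u q') ⬝ᵥ Sum.elim u q'
      = X.mulVec u ⬝ᵥ u + X⁻¹.mulVec (q' + Y.mulVec u) ⬝ᵥ (q' + Y.mulVec u) := by
  have hXit : (X⁻¹)ᵀ = X⁻¹ := by rw [Matrix.transpose_nonsing_inv, hX]
  rw [fromBlocks_mulVec, sumElim_dotProduct_sumElim]
  simp only [Sum.elim_comp_inl, Sum.elim_comp_inr, add_mulVec, add_dotProduct,
    mulVec_add, dotProduct_add]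
  have e1 : (Y * X⁻¹ * Y).mulVec u ⬝ᵥ u = X⁻¹.mulVec (Y.mulVec u) ⬝ᵥ Y.mulVec u := by
    rw [← mulVec_mulVec, ← mulVec_mulVec, sym_dot hY, dotProduct_comm]
  have e2 : (Y * X⁻¹).mulVec q' ⬝ᵥ u = X⁻¹.mulVec q' ⬝ᵥ Y.mulVec u := by
    rw [← mulVec_mulVec, sym_dot hY, dotProduct_comm, dot_aux, hXit, dotProduct_comm]
  have e3 : (X⁻¹ * Y).mulVec u ⬝ᵥ q' = X⁻¹.mulVec (Y.mulVec u) ⬝ᵥ q' := by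
    rw [← mulVec_mulVec]
  rw [e1, e2, e3]
  ring

lemma gaussR (X : Matrix (Fin n) (Fin n) ℝ) (hXpos : X.PosDef) {r : ℝ} (hr : 0 < r)
    (c : ℂ) (q : Fin n → ℝ) :
    ∫ y : Fin n → ℝ, Complex.exp (-(((r : ℝ) : ℂ)) * ((X.mulVec y ⬝ᵥ y : ℝ) : ℂ)
        + c * ((q ⬝ᵥ y : ℝ) : ℂ))
      = ((Real.sqrt (Real.pi ^ n / (r ^ n * X.det)) : ℝ) : ℂ) *
        Complex.exp (c ^ 2 * ((X⁻¹.mulVec q ⬝ᵥ q : ℝ) : ℂ) / (4 * (r : ℂ))) := by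
  have hA := posdef_smul hXpos hr
  have h1 := gaussA (r • X) hA c q
  haveI : Invertible r := invertibleOfNonzero hr.ne'
  have h2 := Matrix.inv_smul (A := X) r hXpos.det_pos.ne'.isUnit
  rw [h2] at h1
  simp only [smul_mulVec, smul_dotProduct, smul_eq_mul, Matrix.det_smul,
    Fintype.card_fin, invOf_eq_inv] at h1
  simp_rw [Complex.ofReal_mul, Complex.ofReal_inv] at h1
  simp_rw [neg_mul]
  rw [h1]
  congr 1
  have hrne : ((r:ℝ):ℂ) ≠ 0 := by exact_mod_cast hr.ne'
  field_simp



lemma mul_exp_eq (C : ℂ) (a b c b' c' d e : ℂ) (h : a + b + c + b' + c' = d + e) :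
    Complex.exp a * (Complex.exp b * (C * Complex.exp c)) *
      (Complex.exp b' * (C * Complex.exp c'))
    = C ^ 2 * Complex.exp d * Complex.exp e := by
  have h2 : Complex.exp a * (Complex.exp b * (C * Complex.exp c)) *
      (Complex.exp b' * (C * Complex.exp c'))
      = C ^ 2 * Complex.exp (a + b + c + b' + c') := by
    simp only [Complex.exp_add]; ring
  rw [h2, h, Complex.exp_add, mul_assoc]


/-- The Wigner transform of `ψ : ℝⁿ → ℂ`:
`Wψ(x,p) = (2πħ)⁻ⁿ ∫ e^{-i p·y/ħ} ψ(x + y/2) conj(ψ(x - y/2)) dy`. -/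
def wigner (n : ℕ) (hb : ℝ) (ψ : (Fin n → ℝ) → ℂ) (x p : Fin n → ℝ) : ℂ :=
  (((2 * Real.pi * hb) ^ n : ℝ)⁻¹ : ℂ) *
    ∫ y : Fin n → ℝ,
      Complex.exp (-(Complex.I * ((p ⬝ᵥ y : ℝ) : ℂ)) / (hb : ℂ)) *
        ψ (x + y / 2) * (starRingEnd ℂ) (ψ (x - y / 2))

/-- The squeezed coherent state
`Φ_M(x) = (πħ)^{-n/4} (det X)^{1/4} e^{-⟨(X+iY)x, x⟩/(2ħ)}` with `M = X + iY`. -/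
def squeezed (n : ℕ) (hb : ℝ) (X Y : Matrix (Fin n) (Fin n) ℝ) (x : Fin n → ℝ) : ℂ :=
  (((Real.pi * hb) ^ (-(n : ℝ) / 4) * X.det ^ ((1 : ℝ) / 4) : ℝ) : ℂ) *
    Complex.exp (-(((X.mulVec x ⬝ᵥ x : ℝ) : ℂ) +
      Complex.I * ((Y.mulVec x ⬝ᵥ x : ℝ) : ℂ)) / (2 * (hb : ℂ)))

/-- The Heisenberg–Weyl operator:
`(T̂(z₀)ψ)(x) = e^{(i/ħ)(p₀·x - p₀·x₀/2)} ψ(x - x₀)`. -/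
def heisenbergWeyl (n : ℕ) (hb : ℝ) (x₀ p₀ : Fin n → ℝ) (ψ : (Fin n → ℝ) → ℂ)
    (x : Fin n → ℝ) : ℂ :=
  Complex.exp ((Complex.I / (hb : ℂ)) *
      (((p₀ ⬝ᵥ x : ℝ) : ℂ) - ((p₀ ⬝ᵥ x₀ : ℝ) : ℂ) / 2)) * ψ (x - x₀)

/-- The Wigner transform of the shifted squeezed coherent state `Φ_{M,z₀} = T̂(z₀)Φ_M` is
`(πħ)⁻ⁿ e^{-⟨G(z-z₀), z-z₀⟩/ħ}` with `G = ((X + Y X⁻¹ Y, Y X⁻¹), (X⁻¹ Y, X⁻¹))`. -/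
theorem wigner_shifted_squeezed {n : ℕ} (hn : 1 ≤ n) (hb : ℝ) (hhb : 0 < hb)
    (X Y : Matrix (Fin n) (Fin n) ℝ) (hX : X.IsSymm) (hY : Y.IsSymm) (hXpos : X.PosDef)
    (x₀ p₀ : Fin n → ℝ) :
    ∀ x p : Fin n → ℝ,
      wigner n hb (heisenbergWeyl n hb x₀ p₀ (squeezed n hb X Y)) x p =
        (((Real.pi * hb) ^ n : ℝ)⁻¹ : ℂ) *
          Complex.exp (-((((Matrix.fromBlocks (X + Y * X⁻¹ * Y) (Y * X⁻¹) (X⁻¹ * Y) X⁻¹).mulVec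
            (Sum.elim (x - x₀) (p - p₀)) ⬝ᵥ Sum.elim (x - x₀) (p - p₀) : ℝ)) : ℂ) / (hb : ℂ)) := by
  intro x p
  have hπ : (0:ℝ) < Real.pi := Real.pi_pos
  have hd : (0:ℝ) < X.det := hXpos.det_pos
  have hbne : ((hb:ℝ):ℂ) ≠ 0 := by exact_mod_cast hhb.ne'
  have hXt : Xᵀ = X := hX
  have hYt : Yᵀ = Y := hY
  set u : Fin n → ℝ := x - x₀ with hu
  set q' : Fin n → ℝ := p - p₀ with hq'
  set qv : Fin n → ℝ := q' + Y.mulVec u with hqv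
  set Creal : ℝ := (Real.pi * hb) ^ (-(n : ℝ) / 4) * X.det ^ ((1 : ℝ) / 4) with hCreal
  have hCpos : 0 < Creal := by rw [hCreal]; positivity
  have key : ∀ y : Fin n → ℝ,
      Complex.exp (-(Complex.I * ((p ⬝ᵥ y : ℝ) : ℂ)) / (hb : ℂ)) *
        heisenbergWeyl n hb x₀ p₀ (squeezed n hb X Y) (x + y / 2) *
        (starRingEnd ℂ) (heisenbergWeyl n hb x₀ p₀ (squeezed n hb X Y) (x - y / 2))
      = ((Creal : ℂ)) ^ 2 * Complex.exp (-(((X.mulVec u ⬝ᵥ u : ℝ)):ℂ) / (hb:ℂ)) *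
        Complex.exp (-((((4 * hb)⁻¹ : ℝ)) : ℂ) * ((X.mulVec y ⬝ᵥ y : ℝ) : ℂ) +
          (-Complex.I / (hb : ℂ)) * ((qv ⬝ᵥ y : ℝ) : ℂ)) := by
    intro y
    have e1 : x + y / 2 - x₀ = u + y / 2 := by rw [hu]; ring
    have e2 : x - y / 2 - x₀ = u - y / 2 := by rw [hu]; ring
    unfold heisenbergWeyl squeezed
    rw [e1, e2]
    simp only [_root_.map_mul, ← Complex.exp_conj, map_add, map_sub, map_neg, map_div₀,
      Complex.conj_I, Complex.conj_ofReal, map_ofNat]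
    refine mul_exp_eq _ _ _ _ _ _ _ _ ?_
    have hp1 : p₀ ⬝ᵥ (x + y / 2) = p₀ ⬝ᵥ x + (p₀ ⬝ᵥ y) / 2 := by
      rw [half_split x y, dotProduct_add, dotProduct_smul, smul_eq_mul]; ring
    have hp2 : p₀ ⬝ᵥ (x - y / 2) = p₀ ⬝ᵥ x - (p₀ ⬝ᵥ y) / 2 := by
      rw [half_split' x y, dotProduct_add, dotProduct_smul, smul_eq_mul]; ring
    have hXp : X.mulVec (u + y / 2) ⬝ᵥ (u + y / 2)
        = X.mulVec u ⬝ᵥ u + 2 * (2⁻¹:ℝ) * (X.mulVec u ⬝ᵥ y) + ((2⁻¹:ℝ))^2 * (X.mulVec y ⬝ᵥ y) := by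
      rw [half_split u y, quad_decomp hXt]
    have hXm : X.mulVec (u - y / 2) ⬝ᵥ (u - y / 2)
        = X.mulVec u ⬝ᵥ u + 2 * (-2⁻¹:ℝ) * (X.mulVec u ⬝ᵥ y) + ((-2⁻¹:ℝ))^2 * (X.mulVec y ⬝ᵥ y) := by
      rw [half_split' u y, quad_decomp hXt]
    have hYp : Y.mulVec (u + y / 2) ⬝ᵥ (u + y / 2)
        = Y.mulVec u ⬝ᵥ u + 2 * (2⁻¹:ℝ) * (Y.mulVec u ⬝ᵥ y) + ((2⁻¹:ℝ))^2 * (Y.mulVec y ⬝ᵥ y) := by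
      rw [half_split u y, quad_decomp hYt]
    have hYm : Y.mulVec (u - y / 2) ⬝ᵥ (u - y / 2)
        = Y.mulVec u ⬝ᵥ u + 2 * (-2⁻¹:ℝ) * (Y.mulVec u ⬝ᵥ y) + ((-2⁻¹:ℝ))^2 * (Y.mulVec y ⬝ᵥ y) := by
      rw [half_split' u y, quad_decomp hYt]
    have hqvy : qv ⬝ᵥ y = (p ⬝ᵥ y - p₀ ⬝ᵥ y) + Y.mulVec u ⬝ᵥ y := by
      rw [hqv, add_dotProduct, hq', sub_dotProduct]
    rw [hp1, hp2, hXp, hXm, hYp, hYm, hqvy]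
    push_cast
    simp only [div_eq_mul_inv, mul_inv]
    ring
  unfold wigner
  simp only [key]
  rw [integral_const_mul]
  rw [gaussR X hXpos (show (0:ℝ) < (4*hb)⁻¹ by positivity) (-Complex.I/(hb:ℂ)) qv]
  have hexp : (-(((X.mulVec u ⬝ᵥ u : ℝ)):ℂ) / (hb:ℂ)) +
      ((-Complex.I/(hb:ℂ))^2 * ((X⁻¹.mulVec qv ⬝ᵥ qv : ℝ):ℂ) / (4 * (((4*hb)⁻¹ : ℝ):ℂ)))
      = -((((Matrix.fromBlocks (X + Y * X⁻¹ * Y) (Y * X⁻¹) (X⁻¹ * Y) X⁻¹).mulVec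
            (Sum.elim u q') ⬝ᵥ Sum.elim u q' : ℝ)) : ℂ) / (hb : ℂ) := by
    rw [block_id hXt hYt u q', div_pow, neg_sq, Complex.I_sq, hqv]
    simp only [dotProduct_add]
    push_cast
    have h4 : (4:ℂ) * (hb:ℂ) ≠ 0 := by simp [hbne]
    field_simp [hbne, h4]
    ring
  have comb : ∀ (k1 k2 k3 : ℂ) (z w : ℂ),
      k1 * ((k2 * Complex.exp z) * (k3 * Complex.exp w)) = (k1*k2*k3) * Complex.exp (z + w) := by
    intros; rw [Complex.exp_add]; ring
  rw [comb, hexp]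
  congr 1
  -- constants
  have hC2pos : 0 < Creal ^ 2 := by positivity
  have hC4 : (Creal ^ 2) ^ 2 = ((Real.pi * hb) ^ n)⁻¹ * X.det := by
    rw [hCreal, ← pow_mul, mul_pow, ← Real.rpow_natCast ((Real.pi * hb) ^ (-(n:ℝ)/4)) 4,
      ← Real.rpow_natCast (X.det ^ ((1:ℝ)/4)) 4,
      ← Real.rpow_mul (by positivity : (0:ℝ) ≤ Real.pi * hb),
      ← Real.rpow_mul hd.le,
      show (-(n:ℝ)/4 * ((4:ℕ):ℝ) : ℝ) = -(n:ℝ) by push_cast; ring,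
      show ((1:ℝ)/4 * ((4:ℕ):ℝ) : ℝ) = 1 by push_cast; ring,
      Real.rpow_neg (by positivity), Real.rpow_natCast, Real.rpow_one]
  have hsq : Real.pi ^ n / ((4*hb)⁻¹ ^ n * X.det)
      = (((Real.pi * hb) ^ n)⁻¹ * (2 * Real.pi * hb) ^ n / Creal ^ 2) ^ 2 := by
    rw [div_pow, mul_pow, hC4]
    have h1 : ((Real.pi * hb) ^ n : ℝ) ≠ 0 := by positivity
    have h2 : (X.det : ℝ) ≠ 0 := hd.ne'
    have h3 : ((4*hb)⁻¹ ^ n : ℝ) ≠ 0 := by positivity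
    field_simp
    ring_nf
    rw [show (2:ℝ)^(n*2) = 4^n by rw [mul_comm n 2, pow_mul]; norm_num,
      show hb^(n*2) = hb^n*hb^n by rw [mul_two, pow_add], one_div, inv_pow, inv_pow]
    field_simp
  have hE : Real.sqrt (Real.pi ^ n / ((4*hb)⁻¹ ^ n * X.det))
      = ((Real.pi * hb) ^ n)⁻¹ * (2 * Real.pi * hb) ^ n / Creal ^ 2 := by
    rw [hsq, Real.sqrt_sq (by positivity)]
  have hconst : (((2 * Real.pi * hb) ^ n)⁻¹ : ℝ) * Creal ^ 2 *
      Real.sqrt (Real.pi ^ n / ((4*hb)⁻¹ ^ n * X.det)) = ((Real.pi * hb) ^ n)⁻¹ := by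
    rw [hE]
    have h1 : ((2 * Real.pi * hb) ^ n : ℝ) ≠ 0 := by positivity
    have h2 : (Creal ^ 2 : ℝ) ≠ 0 := hC2pos.ne'
    field_simp
  calc (((2 * Real.pi * hb) ^ n : ℝ)⁻¹ : ℂ) * (Creal:ℂ)^2 *
        ((Real.sqrt (Real.pi ^ n / ((4*hb)⁻¹ ^ n * X.det)) : ℝ) : ℂ)
      = (((((2 * Real.pi * hb) ^ n)⁻¹ : ℝ) * Creal ^ 2 *
          Real.sqrt (Real.pi ^ n / ((4*hb)⁻¹ ^ n * X.det)) : ℝ) : ℂ) := by push_cast; ring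
    _ = (((Real.pi * hb) ^ n : ℝ)⁻¹ : ℂ) := by rw [hconst, Complex.ofReal_inv]
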